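/- Every G_δ subset S of Baire space (a countable intersection of open sets in ℕ → ℕ) is, with its subspace topology, homeomorphic to some closed subset of Baire space with its subspace topology. -/

import Mathlib

open Filter Set

namespace GdeltaBaire

/-- The predicate: the cylinder of length `n` around `x` is contained in `U`. -/
def P (U : Set (ℕ → ℕ)) (x : ℕ → ℕ) (n : ℕ) : Prop :=
  ∀ y : ℕ → ℕ, (∀ i < n, y i = x i) → y ∈ U

/-- Least cylinder length around `x` contained in `U`. -/
noncomputable def idx (U : Set (ℕ → ℕ)) (x : ℕ → ℕ) : ℕ :=
  sInf {n | P U x n}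

lemma exists_P {U : Set (ℕ → ℕ)} (hU : IsOpen U) {x : ℕ → ℕ} (hx : x ∈ U) :
    ∃ n, P U x n := by
  rw [isOpen_pi_iff] at hU
  obtain ⟨I, u, hu, hI⟩ := hU x hx
  refine ⟨(I.sup id) + 1, fun y hy => hI ?_⟩
  intro i hi
  have : y i = x i := hy i (Nat.lt_succ_of_le (Finset.le_sup (f := id) hi))
  rw [this]
  exact (hu i hi).2

lemma P_idx {U : Set (ℕ → ℕ)} (hU : IsOpen U) {x : ℕ → ℕ} (hx : x ∈ U) :
    P U x (idx U x) :=
  Nat.sInf_mem (exists_P hU hx)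

lemma mem_of_agree {U : Set (ℕ → ℕ)} (hU : IsOpen U) {x : ℕ → ℕ} (hx : x ∈ U)
    {y : ℕ → ℕ} (h : ∀ i < idx U x, y i = x i) : y ∈ U :=
  P_idx hU hx y h

lemma P_congr {U : Set (ℕ → ℕ)} {x y : ℕ → ℕ} {m : ℕ} (h : ∀ i < m, y i = x i)
    {n : ℕ} (hn : n ≤ m) : P U x n ↔ P U y n := by
  constructor <;> intro hp z hz <;> refine hp z fun i hi => ?_
  · rw [hz i hi, h i (lt_of_lt_of_le hi hn)]
  · rw [hz i hi, ← h i (lt_of_lt_of_le hi hn)]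

lemma idx_congr {U : Set (ℕ → ℕ)} (hU : IsOpen U) {x : ℕ → ℕ} (hx : x ∈ U)
    {y : ℕ → ℕ} (h : ∀ i < idx U x, y i = x i) : idx U y = idx U x := by
  have h1 : idx U y ≤ idx U x :=
    Nat.sInf_le ((P_congr h le_rfl).1 (P_idx hU hx))
  refine le_antisymm h1 (Nat.sInf_le ?_)
  have hy : y ∈ U := mem_of_agree hU hx h
  exact (P_congr h h1).2 (P_idx hU hy)

end GdeltaBaire

open GdeltaBaire

/-- Every Gδ subset of Baire space is homeomorphic (with the subspace topologies) to a
closed subset of Baire space. -/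
theorem gdelta_homeomorph_closed (S : Set (ℕ → ℕ)) (hS : IsGδ S) :
    ∃ C : Set (ℕ → ℕ), IsClosed C ∧ Nonempty (↥S ≃ₜ ↥C) := by
  obtain ⟨U, hU, rfl⟩ := hS.eq_iInter_nat
  set S : Set (ℕ → ℕ) := ⋂ n, U n with hSdef
  have memU : ∀ (x : S) (n : ℕ), (x : ℕ → ℕ) ∈ U n := fun x n =>
    Set.mem_iInter.1 x.2 n
  -- the function recording cylinder depths
  set f : S → ℕ → ℕ := fun x n => idx (U n) (x : ℕ → ℕ) with hf
  -- F : S → (ℕ→ℕ) × (ℕ→ℕ)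
  set F : S → (ℕ → ℕ) × (ℕ → ℕ) := fun x => ((x : ℕ → ℕ), f x) with hF
  -- cylinders are open
  have cyl_open : ∀ (x : ℕ → ℕ) (n : ℕ), IsOpen {y : ℕ → ℕ | ∀ i < n, y i = x i} := by
    intro x n
    have : {y : ℕ → ℕ | ∀ i < n, y i = x i} =
        ⋂ i ∈ Finset.range n, (fun y : ℕ → ℕ => y i) ⁻¹' {x i} := by
      ext y; simp [Finset.mem_range]
    rw [this]
    exact isOpen_biInter_finset fun i _ => (continuous_apply i).isOpen_preimage _ (isOpen_discrete _)
  -- f is continuous (locally constant in each coordinate)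
  have hfc : ∀ n, Continuous fun x : S => f x n := by
    intro n
    refine IsLocallyConstant.continuous ?_
    rw [IsLocallyConstant.iff_exists_open]
    intro x
    refine ⟨Subtype.val ⁻¹' {y : ℕ → ℕ | ∀ i < f x n, y i = (x : ℕ → ℕ) i},
      (cyl_open _ _).preimage continuous_subtype_val, fun i hi => rfl, ?_⟩
    intro y hy
    exact idx_congr (hU n) (memU x n) hy
  have hFc : Continuous F :=
    continuous_subtype_val.prodMk (continuous_pi hfc)
  -- F is an embedding
  have hFe : Topology.IsEmbedding F :=
    Topology.IsEmbedding.of_comp hFc continuous_fst Topology.IsEmbedding.subtypeVal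
  -- range F is closed
  have hclosed : IsClosed (Set.range F) := by
    rw [← isSeqClosed_iff_isClosed]
    intro z p hz hp
    choose w hw using fun k => hz k
    rw [Prod.tendsto_iff] at hp
    obtain ⟨hp1, hp2⟩ := hp
    have hw1 : Tendsto (fun k => (w k : ℕ → ℕ)) atTop (nhds p.1) := by
      simpa [← hw] using hp1
    have hw2 : ∀ n, ∀ᶠ k in atTop, f (w k) n = p.2 n := by
      intro n
      have := (tendsto_pi_nhds.1 hp2) n
      have h2 : Tendsto (fun k => f (w k) n) atTop (nhds (p.2 n)) := by
        simpa [← hw] using this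
      have h3 := h2 (IsOpen.mem_nhds (isOpen_discrete ({p.2 n} : Set ℕ)) rfl)
      filter_upwards [h3] with k hk using hk
    have hagree : ∀ m : ℕ, ∀ᶠ k in atTop, ∀ i < m, (w k : ℕ → ℕ) i = p.1 i := by
      intro m
      have hcoord : ∀ i : ℕ, ∀ᶠ k in atTop, (w k : ℕ → ℕ) i = p.1 i := by
        intro i
        have h2 := (tendsto_pi_nhds.1 hw1) i
        have h3 := h2 (IsOpen.mem_nhds (isOpen_discrete ({p.1 i} : Set ℕ)) rfl)
        filter_upwards [h3] with k hk using hk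
      have : ∀ᶠ k in atTop, ∀ i ∈ Finset.range m, (w k : ℕ → ℕ) i = p.1 i :=
        (Filter.eventually_all_finset _).2 fun i _ => hcoord i
      filter_upwards [this] with k hk i hi using hk i (Finset.mem_range.2 hi)
    have hx : p.1 ∈ S := by
      rw [hSdef, Set.mem_iInter]
      intro n
      obtain ⟨k, hk1, hk2⟩ := ((hw2 n).and (hagree (p.2 n))).exists
      refine mem_of_agree (hU n) (memU (w k) n) (y := p.1) ?_
      intro i hi
      have : i < p.2 n := by rwa [show idx (U n) (w k : ℕ → ℕ) = p.2 n from hk1] at hi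
      exact (hk2 i this).symm
    have hg : p.2 = f ⟨p.1, hx⟩ := by
      funext n
      obtain ⟨k, hk1, hk2⟩ := ((hw2 n).and (hagree (f ⟨p.1, hx⟩ n))).exists
      have := idx_congr (hU n) (memU ⟨p.1, hx⟩ n) (y := (w k : ℕ → ℕ)) hk2
      rw [← hk1]
      exact this
    exact ⟨⟨p.1, hx⟩, by rw [hF]; exact Prod.ext rfl hg.symm⟩
  -- assemble
  let H : ((ℕ → ℕ) × (ℕ → ℕ)) ≃ₜ (ℕ → ℕ) :=
    (Homeomorph.sumArrowHomeomorphProdArrow).symm.trans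
      (Homeomorph.piCongrLeft (Y := fun _ => ℕ) Equiv.natSumNatEquivNat)
  refine ⟨H '' Set.range F, H.isClosedMap _ hclosed, ⟨?_⟩⟩
  exact hFe.toHomeomorph.trans (H.image (Set.range F))
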